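/- For every Ferrers graph G there exists a finite subset V of the positive integers, with odd minimum and even maximum, such that Gamma_V is graph-isomorphic to G. -/

import Mathlib

attribute [local instance] Classical.propDecidable

noncomputable section

structure FerrersGraph where
  n : ℕ
  m : ℕ
  hn : 0 < n
  hm : 0 < m
  adj : Fin n → Fin m → Prop
  mono : ∀ i i' : Fin n, ∀ j j' : Fin m, adj i j → i ≤ i' → j' ≤ j → adj i' j'
  corner1 : adj ⟨0, hn⟩ ⟨0, hm⟩
  corner2 : adj ⟨n - 1, Nat.sub_lt hn one_pos⟩ ⟨m - 1, Nat.sub_lt hm one_pos⟩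

def FerrersGraph.graph (G : FerrersGraph) : SimpleGraph (Fin G.n ⊕ Fin G.m) :=
  SimpleGraph.fromRel fun u v =>
    match u, v with
    | Sum.inl i, Sum.inr j => G.adj i j
    | _, _ => False

def GammaGraph (V : Finset ℕ) : SimpleGraph ↥V :=
  SimpleGraph.fromRel fun a b => Odd (a : ℕ) ∧ Even (b : ℕ) ∧ (a : ℕ) < (b : ℕ)

/-- Degree of row `i`. -/
def Fd (G : FerrersGraph) (i : Fin G.n) : ℕ :=
  (Finset.univ.filter (fun j => G.adj i j)).card

lemma Fd_le (G : FerrersGraph) (i : Fin G.n) : Fd G i ≤ G.m := by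
  have := Finset.card_filter_le (Finset.univ : Finset (Fin G.m)) (fun j => G.adj i j)
  exact le_of_le_of_eq this (Finset.card_univ.trans (Fintype.card_fin _))

lemma adj_iff_lt (G : FerrersGraph) (i : Fin G.n) (j : Fin G.m) :
    G.adj i j ↔ (j : ℕ) < Fd G i := by
  constructor
  · intro h
    have hsub : Finset.Iic j ⊆ Finset.univ.filter (fun k => G.adj i k) := by
      intro k hk
      simp only [Finset.mem_Iic] at hk
      simp only [Finset.mem_filter, Finset.mem_univ, true_and]
      exact G.mono i i j k h le_rfl hk
    have := Finset.card_le_card hsub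
    rw [Fin.card_Iic] at this
    simp only [Fd]
    omega
  · intro h
    by_contra hadj
    have hsub : Finset.univ.filter (fun k => G.adj i k) ⊆ Finset.Iio j := by
      intro k hk
      simp only [Finset.mem_filter, Finset.mem_univ, true_and] at hk
      simp only [Finset.mem_Iio]
      by_contra hlt
      exact hadj (G.mono i i k j hk le_rfl (not_lt.mp hlt))
    have := Finset.card_le_card hsub
    rw [Fin.card_Iio] at this
    simp only [Fd] at h
    omega

lemma Fd_pos (G : FerrersGraph) (i : Fin G.n) : 1 ≤ Fd G i := by
  have h0 : G.adj i ⟨0, G.hm⟩ :=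
    G.mono ⟨0, G.hn⟩ i ⟨0, G.hm⟩ ⟨0, G.hm⟩ G.corner1 (by simp [Fin.le_def]) le_rfl
  have := (adj_iff_lt G i ⟨0, G.hm⟩).mp h0
  omega

lemma Fd_last (G : FerrersGraph) :
    Fd G ⟨G.n - 1, Nat.sub_lt G.hn one_pos⟩ = G.m := by
  set i : Fin G.n := ⟨G.n - 1, Nat.sub_lt G.hn one_pos⟩
  have h : G.adj i ⟨G.m - 1, Nat.sub_lt G.hm one_pos⟩ := G.corner2
  have := (adj_iff_lt G i ⟨G.m - 1, Nat.sub_lt G.hm one_pos⟩).mp h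
  have h2 := Fd_le G i
  simp only at this
  omega

/-- Labels of vertices. -/
def phi (G : FerrersGraph) : Fin G.n ⊕ Fin G.m → ℕ
  | Sum.inl i => 2 * (G.n + 1) * (G.m - Fd G i) + 2 * (i : ℕ) + 1
  | Sum.inr j => 2 * (G.n + 1) * (G.m - (j : ℕ))

lemma phi_inl_odd (G : FerrersGraph) (i : Fin G.n) : Odd (phi G (Sum.inl i)) :=
  ⟨(G.n + 1) * (G.m - Fd G i) + (i : ℕ), by simp [phi]; ring⟩

lemma phi_inr_even (G : FerrersGraph) (j : Fin G.m) : Even (phi G (Sum.inr j)) :=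
  ⟨(G.n + 1) * (G.m - (j : ℕ)), by simp [phi]; ring⟩

lemma key_lt (K m d i j : ℕ) (hd : d ≤ m) (hj : j < m) (hi : i < K) :
    2 * K * (m - d) + 2 * i + 1 < 2 * K * (m - j) ↔ j < d := by
  constructor
  · intro h
    by_contra hc
    push_neg at hc
    have h1 : m - j ≤ m - d := by omega
    have := Nat.mul_le_mul_left (2 * K) h1
    omega
  · intro h
    have h1 : m - d + 1 ≤ m - j := by omega
    have h2 : 2 * K * (m - d + 1) ≤ 2 * K * (m - j) := Nat.mul_le_mul_left _ h1
    have : 2 * K * (m - d + 1) = 2 * K * (m - d) + 2 * K := by ring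
    omega

lemma phi_lt_iff (G : FerrersGraph) (i : Fin G.n) (j : Fin G.m) :
    phi G (Sum.inl i) < phi G (Sum.inr j) ↔ G.adj i j := by
  rw [adj_iff_lt]
  exact key_lt (G.n + 1) G.m (Fd G i) i j (Fd_le G i) j.isLt (by omega)

lemma phi_inj (G : FerrersGraph) : Function.Injective (phi G) := by
  intro x y h
  match x, y with
  | Sum.inl i, Sum.inl i' =>
    simp only [phi] at h
    have ho : (2 * (i : ℕ) + 1) % (2 * (G.n + 1)) = (2 * (i' : ℕ) + 1) % (2 * (G.n + 1)) := by
      have e1 : 2 * (G.n + 1) * (G.m - Fd G i) + 2 * (i : ℕ) + 1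
          = (2 * (i : ℕ) + 1) + (G.m - Fd G i) * (2 * (G.n + 1)) := by ring
      have e2 : 2 * (G.n + 1) * (G.m - Fd G i') + 2 * (i' : ℕ) + 1
          = (2 * (i' : ℕ) + 1) + (G.m - Fd G i') * (2 * (G.n + 1)) := by ring
      rw [e1, e2] at h
      calc (2 * (i : ℕ) + 1) % (2 * (G.n + 1))
          = ((2 * (i : ℕ) + 1) + (G.m - Fd G i) * (2 * (G.n + 1))) % (2 * (G.n + 1)) := by
            rw [Nat.add_mul_mod_self_right]
        _ = ((2 * (i' : ℕ) + 1) + (G.m - Fd G i') * (2 * (G.n + 1))) % (2 * (G.n + 1)) := by rw [h]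
        _ = (2 * (i' : ℕ) + 1) % (2 * (G.n + 1)) := by rw [Nat.add_mul_mod_self_right]
    have hi : (2 * (i : ℕ) + 1) % (2 * (G.n + 1)) = 2 * (i : ℕ) + 1 :=
      Nat.mod_eq_of_lt (by have := i.isLt; omega)
    have hi' : (2 * (i' : ℕ) + 1) % (2 * (G.n + 1)) = 2 * (i' : ℕ) + 1 :=
      Nat.mod_eq_of_lt (by have := i'.isLt; omega)
    rw [hi, hi'] at ho
    exact congrArg Sum.inl (Fin.ext (by omega))
  | Sum.inl i, Sum.inr j =>
    exact absurd (h ▸ phi_inl_odd G i) (Nat.not_odd_iff_even.mpr (phi_inr_even G j))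
  | Sum.inr j, Sum.inl i =>
    exact absurd (h ▸ phi_inr_even G j) (Nat.not_even_iff_odd.mpr (phi_inl_odd G i))
  | Sum.inr j, Sum.inr j' =>
    simp only [phi] at h
    have hK : 0 < 2 * (G.n + 1) := by omega
    have : G.m - (j : ℕ) = G.m - (j' : ℕ) := Nat.eq_of_mul_eq_mul_left hK h
    have hj := j.isLt; have hj' := j'.isLt
    exact congrArg Sum.inr (Fin.ext (by omega))

theorem exists_gammaGraph_iso_ferrers (G : FerrersGraph) :
    ∃ V : Finset ℕ, (∀ v ∈ V, 0 < v) ∧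
      (∃ o ∈ V, Odd o ∧ ∀ v ∈ V, o ≤ v) ∧
      (∃ e ∈ V, Even e ∧ ∀ v ∈ V, v ≤ e) ∧
      Nonempty (GammaGraph V ≃g G.graph) := by
  classical
  set V : Finset ℕ := Finset.univ.image (phi G) with hV
  have hmemV : ∀ x, phi G x ∈ V := fun x =>
    Finset.mem_image_of_mem _ (Finset.mem_univ x)
  refine ⟨V, ?_, ?_, ?_, ?_⟩
  · -- positivity
    intro v hv
    obtain ⟨x, -, rfl⟩ := Finset.mem_image.mp hv
    match x with
    | Sum.inl i => simp only [phi]; omega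
    | Sum.inr j =>
      simp only [phi]
      have hj : (j : ℕ) < G.m := j.isLt
      have : 1 ≤ G.m - (j : ℕ) := by omega
      have := Nat.mul_le_mul_left (2 * (G.n + 1)) this
      omega
  · -- odd minimum
    have hne : V.Nonempty := ⟨_, hmemV (Sum.inr ⟨0, G.hm⟩)⟩
    set iL : Fin G.n := ⟨G.n - 1, Nat.sub_lt G.hn one_pos⟩
    have hdL : Fd G iL = G.m := Fd_last G
    have hphiL : phi G (Sum.inl iL) = 2 * (G.n - 1) + 1 := by
      simp [phi, hdL]
      rfl
    refine ⟨V.min' hne, V.min'_mem hne, ?_, fun v hv => V.min'_le v hv⟩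
    have hle : V.min' hne ≤ 2 * (G.n - 1) + 1 := by
      have := V.min'_le _ (hmemV (Sum.inl iL))
      omega
    obtain ⟨x, -, hx⟩ := Finset.mem_image.mp (V.min'_mem hne)
    match x with
    | Sum.inl i => rw [← hx]; exact phi_inl_odd G i
    | Sum.inr j =>
      exfalso
      have hj : (j : ℕ) < G.m := j.isLt
      have h1 : 1 ≤ G.m - (j : ℕ) := by omega
      have h2 := Nat.mul_le_mul_left (2 * (G.n + 1)) h1
      have : phi G (Sum.inr j) ≥ 2 * (G.n + 1) := by
        simp only [phi]; omega
      omega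
  · -- even maximum
    refine ⟨phi G (Sum.inr ⟨0, G.hm⟩), hmemV _, phi_inr_even G _, ?_⟩
    intro v hv
    obtain ⟨x, -, rfl⟩ := Finset.mem_image.mp hv
    have hmax : phi G (Sum.inr ⟨0, G.hm⟩) = 2 * (G.n + 1) * G.m := by
      simp [phi]
    rw [hmax]
    match x with
    | Sum.inl i =>
      have h1 : (G.m - Fd G i) + 1 ≤ G.m := by
        have := Fd_pos G i; have := Fd_le G i; have := G.hm; omega
      have h2 : 2 * (G.n + 1) * ((G.m - Fd G i) + 1) ≤ 2 * (G.n + 1) * G.m :=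
        Nat.mul_le_mul_left _ h1
      have h3 : 2 * (G.n + 1) * ((G.m - Fd G i) + 1)
          = 2 * (G.n + 1) * (G.m - Fd G i) + 2 * (G.n + 1) := by ring
      have h4 : 2 * (i : ℕ) + 1 < 2 * (G.n + 1) := by have := i.isLt; omega
      simp only [phi]
      linarith
    | Sum.inr j =>
      simp only [phi]
      exact Nat.mul_le_mul_left _ (Nat.sub_le _ _)
  · -- the isomorphism
    set ψ : Fin G.n ⊕ Fin G.m → ↥V := fun x => ⟨phi G x, hmemV x⟩ with hψ
    have hinj : Function.Injective ψ := by
      intro x y h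
      exact phi_inj G (Subtype.ext_iff.mp h)
    have hsurj : Function.Surjective ψ := by
      rintro ⟨v, hv⟩
      obtain ⟨x, -, rfl⟩ := Finset.mem_image.mp hv
      exact ⟨x, rfl⟩
    have hadj : ∀ x y, (GammaGraph V).Adj (ψ x) (ψ y) ↔ G.graph.Adj x y := by
      intro x y
      rw [GammaGraph, FerrersGraph.graph, SimpleGraph.fromRel_adj,
        SimpleGraph.fromRel_adj]
      match x, y with
      | Sum.inl i, Sum.inl i' =>
        constructor
        · rintro ⟨-, ⟨-, he, -⟩ | ⟨-, he, -⟩⟩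
          · exact absurd he (Nat.not_even_iff_odd.mpr (phi_inl_odd G i'))
          · exact absurd he (Nat.not_even_iff_odd.mpr (phi_inl_odd G i))
        · rintro ⟨-, h | h⟩ <;> exact h.elim
      | Sum.inr j, Sum.inr j' =>
        constructor
        · rintro ⟨-, ⟨ho, -, -⟩ | ⟨ho, -, -⟩⟩
          · exact absurd ho (Nat.not_odd_iff_even.mpr (phi_inr_even G j))
          · exact absurd ho (Nat.not_odd_iff_even.mpr (phi_inr_even G j'))
        · rintro ⟨-, h | h⟩ <;> exact h.elim
      | Sum.inl i, Sum.inr j =>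
        constructor
        · rintro ⟨-, ⟨-, -, hlt⟩ | ⟨ho, -, -⟩⟩
          · exact ⟨by simp, Or.inl ((phi_lt_iff G i j).mp hlt)⟩
          · exact absurd ho (Nat.not_odd_iff_even.mpr (phi_inr_even G j))
        · rintro ⟨-, h | h⟩
          · refine ⟨?_, Or.inl ⟨phi_inl_odd G i, phi_inr_even G j,
              (phi_lt_iff G i j).mpr h⟩⟩
            intro hc
            exact Sum.inl_ne_inr (hinj hc)
          · exact h.elim
      | Sum.inr j, Sum.inl i =>
        constructor
        · rintro ⟨-, ⟨ho, -, -⟩ | ⟨-, -, hlt⟩⟩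
          · exact absurd ho (Nat.not_odd_iff_even.mpr (phi_inr_even G j))
          · exact ⟨by simp, Or.inr ((phi_lt_iff G i j).mp hlt)⟩
        · rintro ⟨-, h | h⟩
          · exact h.elim
          · refine ⟨?_, Or.inr ⟨phi_inl_odd G i, phi_inr_even G j,
              (phi_lt_iff G i j).mpr h⟩⟩
            intro hc
            exact Sum.inr_ne_inl (hinj hc)
    exact ⟨(RelIso.mk (Equiv.ofBijective ψ ⟨hinj, hsurj⟩)
      (fun {x y} => hadj x y)).symm⟩

end
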